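/- Let p ≥ 1 and k ≥ 1 be integers with gcd(k,p) = 1. If cos(πk/p) is a rational number, then cos(π/p) is also a rational number. -/

import Mathlib

open Real

/-- If `gcd(k,p) = 1` and `cos(πk/p)` is rational, then `cos(π/p)` is rational. -/
theorem stmt_7 (p k : ℕ) (hp : 1 ≤ p) (hk : 1 ≤ k) (hkp : Nat.Coprime k p)
    (h : ∃ m : ℚ, Real.cos (π * k / p) = (m : ℝ)) :
    ∃ m : ℚ, Real.cos (π / p) = (m : ℝ) := by
  obtain ⟨m, hm⟩ := h
  have hco : IsCoprime (k : ℤ) (p : ℤ) := by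
    rw [Int.isCoprime_iff_gcd_eq_one]; exact_mod_cast hkp
  obtain ⟨a, b, hab⟩ := hco
  have hp0 : (p : ℝ) ≠ 0 := by positivity
  set θ : ℝ := π * k / p with hθ
  have key : π / p = a * θ + b * π := by
    have h1 : ((a * k + b * p : ℤ) : ℝ) = 1 := by rw [hab]; norm_num
    push_cast at h1
    rw [hθ]
    field_simp
    linear_combination -h1
  have hcos : Real.cos (π / p) = (-1 : ℝ) ^ b * Real.cos (a * θ) := by
    rw [key, Real.cos_add_int_mul_pi]
  have hT : Real.cos (a * θ) = ((Polynomial.Chebyshev.T ℚ a).eval m : ℚ) := by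
    have := Polynomial.Chebyshev.T_real_cos θ a
    rw [hm] at this
    rw [← this]
    rw [← Polynomial.Chebyshev.map_T (algebraMap ℚ ℝ) a, Polynomial.eval_map,
      show ((m : ℝ)) = algebraMap ℚ ℝ m from rfl, Polynomial.eval₂_at_apply]
    simp
  refine ⟨(-1 : ℚ) ^ b * (Polynomial.Chebyshev.T ℚ a).eval m, ?_⟩
  rw [hcos, hT]
  push_cast
  ring
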